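/- Let E be a real inner product space, C ⊆ E convex compact with 0 ∈ C, and f : C → C 1-Lipschitz. For λ ∈ (0,1), let y_λ be the unique fixed point of x ↦ λ f(x). Then y_λ converges as λ → 1 to x*, the orthogonal projection of 0 onto the set Fix(f) of fixed points of f (that is, the unique point of Fix(f) of minimal norm). -/

import Mathlib

open Set Filter Topology

theorem ylam_tendsto_projection
    {E : Type*} [NormedAddCommGroup E] [InnerProductSpace ℝ E]
    (C : Set E) (hC : Convex ℝ C) (hCcpt : IsCompact C) (h0 : (0:E) ∈ C)
    (f : E → E) (hf : MapsTo f C C) (hlip : LipschitzOnWith 1 f C)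
    (y : ℝ → E) (hy : ∀ l ∈ Ioo (0:ℝ) 1, y l ∈ C ∧ l • f (y l) = y l)
    (xstar : E) (hxstar : xstar ∈ C ∧ f xstar = xstar ∧
      ∀ z ∈ C, f z = z → ‖xstar‖ ≤ ‖z‖) :
    Tendsto y (nhdsWithin 1 (Ioo (0:ℝ) 1)) (nhds xstar) := by
  obtain ⟨hxC, hxfix, hxmin⟩ := hxstar
  -- Key inequality: ‖y l‖² ≤ ⟪y l, xstar⟫ for l ∈ (0,1)
  have key : ∀ l ∈ Ioo (0:ℝ) 1, ‖y l‖^2 ≤ (inner ℝ (y l) xstar : ℝ) := by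
    intro l hl
    obtain ⟨hyC, hyfix⟩ := hy l hl
    obtain ⟨hl0, hl1⟩ := hl
    have hdist : dist (f (y l)) (f xstar) ≤ 1 * dist (y l) xstar :=
      hlip.dist_le_mul (y l) hyC xstar hxC
    have hnorm : ‖f (y l) - f xstar‖ ≤ ‖y l - xstar‖ := by
      rwa [dist_eq_norm, dist_eq_norm, one_mul] at hdist
    have heq : y l - l • xstar = l • (f (y l) - f xstar) := by
      rw [smul_sub, hyfix, hxfix]
    have h1 : ‖y l - l • xstar‖ ≤ l * ‖y l - xstar‖ := by
      rw [heq, norm_smul, Real.norm_eq_abs, abs_of_pos hl0]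
      exact mul_le_mul_of_nonneg_left hnorm hl0.le
    have h2 : ‖y l - l • xstar‖^2 ≤ (l * ‖y l - xstar‖)^2 :=
      pow_le_pow_left₀ (norm_nonneg _) h1 2
    have e1 : ‖y l - l • xstar‖^2
        = ‖y l‖^2 - 2 * (l * (inner ℝ (y l) xstar : ℝ)) + l^2 * ‖xstar‖^2 := by
      rw [norm_sub_sq_real, real_inner_smul_right, norm_smul, Real.norm_eq_abs,
        abs_of_pos hl0, mul_pow]
    have e2 : ‖y l - xstar‖^2
        = ‖y l‖^2 - 2 * (inner ℝ (y l) xstar : ℝ) + ‖xstar‖^2 := norm_sub_sq_real _ _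
    have hc := sq_nonneg ‖xstar‖
    have ha := sq_nonneg ‖y l‖
    rw [e1, mul_pow, e2] at h2
    nlinarith [mul_nonneg ha (sq_nonneg (1 - l)), mul_pos hl0 (sub_pos.2 hl1)]
  rw [tendsto_iff_ultrafilter]
  intro g hg
  have hmem : ∀ᶠ l in (g : Filter ℝ), l ∈ Ioo (0:ℝ) 1 := hg self_mem_nhdsWithin
  have hyCg : ∀ᶠ l in (g : Filter ℝ), y l ∈ C := hmem.mono fun l hl => (hy l hl).1
  have hl1 : Tendsto (fun l : ℝ => l) g (𝓝 1) := hg.trans nhdsWithin_le_nhds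
  obtain ⟨p, hpC, hp⟩ :=
    hCcpt.ultrafilter_le_nhds (g.map y) (le_principal_iff.2 (by exact hyCg))
  have hyp : Tendsto y (g : Filter ℝ) (𝓝 p) := hp
  -- p is a fixed point of f
  have hypC : Tendsto y (g : Filter ℝ) (𝓝[C] p) :=
    tendsto_nhdsWithin_iff.2 ⟨hyp, hyCg⟩
  have hcont : ContinuousWithinAt f C p := hlip.continuousOn.continuousWithinAt hpC
  have hfy : Tendsto (fun l => f (y l)) (g : Filter ℝ) (𝓝 (f p)) :=
    hcont.tendsto.comp hypC
  have hfy' : Tendsto (fun l => l • f (y l)) (g : Filter ℝ) (𝓝 ((1:ℝ) • f p)) :=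
    hl1.smul hfy
  have hfp : f p = p := by
    rw [one_smul] at hfy'
    have heq : ∀ᶠ l in (g : Filter ℝ), l • f (y l) = y l :=
      hmem.mono fun l hl => (hy l hl).2
    exact tendsto_nhds_unique (hfy'.congr' heq) hyp
  -- pass key inequality to the limit
  have hlim : Tendsto (fun l => (inner ℝ (y l) xstar : ℝ) - ‖y l‖^2) (g : Filter ℝ)
      (𝓝 ((inner ℝ p xstar : ℝ) - ‖p‖^2)) :=
    (hyp.inner tendsto_const_nhds).sub (hyp.norm.pow 2)
  have h2 : 0 ≤ (inner ℝ p xstar : ℝ) - ‖p‖^2 :=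
    ge_of_tendsto hlim (hmem.mono fun l hl => sub_nonneg.2 (key l hl))
  have hmin : ‖xstar‖ ≤ ‖p‖ := hxmin p hpC hfp
  have hzero : ‖p - xstar‖ = 0 := by
    have hexp : ‖p - xstar‖^2 = ‖p‖^2 - 2 * (inner ℝ p xstar : ℝ) + ‖xstar‖^2 :=
      norm_sub_sq_real _ _
    nlinarith [norm_nonneg (p - xstar), norm_nonneg p, norm_nonneg xstar]
  have : p = xstar := sub_eq_zero.1 (norm_eq_zero.1 hzero)
  exact this ▸ hyp
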